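/- (Path representation of the two-point function.) Let G = (V,E) be a finite simple graph with edge weights K : E → ℂ and Z_{G,K} ≠ 0, and let x_1, x_2 ∈ V be distinct. Then S_2(x_1, x_2) = Σ_γ χ_K(γ) · (Z_{G,K}(V(γ)) / Z_{G,K})^2, where the sum runs over all simple paths γ in G from x_1 to x_2 having an odd number of edges, χ_K(γ) := ∏_{b∈γ} K_b, and V(γ) is the set of vertices visited by γ. -/

import Mathlib

open scoped Classical symmDiff
open Finset

/-- `ω` is a dimer cover (perfect matching) of the graph `G` depleted by the
monomer set `M`. -/
def IsDimerCover {V : Type*} (G : SimpleGraph V) (M : Finset V)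
    (ω : Finset (Sym2 V)) : Prop :=
  (∀ e ∈ ω, e ∈ G.edgeSet) ∧
  (∀ v ∈ M, ∀ e ∈ ω, v ∉ e) ∧
  (∀ v : V, v ∉ M → ∃! e, e ∈ ω ∧ v ∈ e)

/-- The monomer-depleted weighted dimer partition function `Z_{G,K}(M)`. -/
noncomputable def Zdimer {V : Type*} [Fintype V] [DecidableEq V]
    (G : SimpleGraph V) (K : Sym2 V → ℂ) (M : Finset V) : ℂ :=
  ∑ ω ∈ Finset.univ.filter (IsDimerCover G M), ∏ b ∈ ω, K b

section Aux

variable {V : Type*} [DecidableEq V] {G : SimpleGraph V}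

/-- Alternating edge sets of a walk: `altE true` are the odd-position edges
(1st, 3rd, ...), `altE false` the even-position ones. -/
def altE (b : Bool) : ∀ {u v : V}, G.Walk u v → Finset (Sym2 V)
  | _, _, SimpleGraph.Walk.nil => ∅
  | _, _, SimpleGraph.Walk.cons (u := u) (v := w) _ p =>
      if b then insert s(u, w) (altE (!b) p) else altE (!b) p

@[simp] lemma altE_nil {b : Bool} {u : V} : altE b (SimpleGraph.Walk.nil : G.Walk u u) = ∅ := rfl

lemma altE_cons_true {u w v : V} (h : G.Adj u w) (p : G.Walk w v) :
    altE true (SimpleGraph.Walk.cons h p) = insert s(u, w) (altE false p) := rfl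

lemma altE_cons_false {u w v : V} (h : G.Adj u w) (p : G.Walk w v) :
    altE false (SimpleGraph.Walk.cons h p) = altE true p := rfl

lemma altE_subset_edges {b : Bool} {u v : V} (p : G.Walk u v) :
    ∀ e ∈ altE b p, e ∈ p.edges := by
  induction p generalizing b with
  | nil => simp
  | cons h q ih =>
    intro e he
    cases b with
    | false => rw [altE_cons_false] at he; exact List.mem_cons_of_mem _ (ih e he)
    | true =>
      rw [altE_cons_true] at he
      rcases Finset.mem_insert.1 he with rfl | he
      · exact List.mem_cons_self
      · exact List.mem_cons_of_mem _ (ih e he)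

lemma altE_union {u v : V} (p : G.Walk u v) :
    altE true p ∪ altE false p = p.edges.toFinset := by
  induction p with
  | nil => simp
  | cons h q ih =>
    rw [altE_cons_true, altE_cons_false, SimpleGraph.Walk.edges_cons]
    rw [Finset.insert_union, Finset.union_comm, ih]
    simp

lemma mem_support_of_mem_edges' {u v w : V} (p : G.Walk u v) {e : Sym2 V}
    (he : e ∈ p.edges) (hw : w ∈ e) : w ∈ p.support := by
  induction e with
  | h x y =>
    rcases Sym2.mem_iff.1 hw with rfl | rfl
    · exact p.fst_mem_support_of_mem_edges he
    · exact p.snd_mem_support_of_mem_edges he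

lemma altE_mem_support {b : Bool} {u v w : V} {p : G.Walk u v} {e : Sym2 V}
    (he : e ∈ altE b p) (hw : w ∈ e) : w ∈ p.support :=
  mem_support_of_mem_edges' p (altE_subset_edges p e he) hw

/-- Main structural facts about the alternating edge sets of a simple path. -/
lemma alt_main {u v : V} (p : G.Walk u v) (hp : p.IsPath) :
    (∀ b, ∀ w : V, ∀ e ∈ altE b p, ∀ f ∈ altE b p, w ∈ e → w ∈ f → e = f) ∧
    (∀ e ∈ altE false p, u ∉ e) ∧
    (0 < p.length → ∃ e ∈ altE true p, u ∈ e) ∧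
    (∀ w ∈ p.support, w ≠ u → w ≠ v → ∀ b, ∃ e ∈ altE b p, w ∈ e) ∧
    (Odd p.length → (∃ e ∈ altE true p, v ∈ e) ∧ ∀ e ∈ altE false p, v ∉ e) ∧
    (Even p.length → (∀ e ∈ altE true p, v ∉ e) ∧ (0 < p.length → ∃ e ∈ altE false p, v ∈ e)) := by
  induction p with
  | nil => simp
  | @cons u y v h q ih =>
    rw [SimpleGraph.Walk.cons_isPath_iff] at hp
    obtain ⟨hq, hu⟩ := hp
    obtain ⟨M2, M3, M4, M5, M6, M7⟩ := ih hq
    have hT : altE true (SimpleGraph.Walk.cons h q) = insert s(u, y) (altE false q) :=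
      altE_cons_true h q
    have hF : altE false (SimpleGraph.Walk.cons h q) = altE true q := altE_cons_false h q
    refine ⟨?_, ?_, ?_, ?_, ?_, ?_⟩
    · -- at most one edge of each parity per vertex
      intro b w e he f hf hwe hwf
      cases b with
      | false => rw [hF] at he hf; exact M2 true w e he f hf hwe hwf
      | true =>
        rw [hT] at he hf
        have key : ∀ g ∈ altE false q, w ∈ g → w ∈ (s(u, y) : Sym2 V) → False := by
          intro g hg hwg hws
          rcases Sym2.mem_iff.1 hws with rfl | rfl
          · exact hu (altE_mem_support hg hwg)
          · exact M3 g hg hwg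
        rcases Finset.mem_insert.1 he with rfl | he <;>
          rcases Finset.mem_insert.1 hf with rfl | hf
        · rfl
        · exact (key f hf hwf hwe).elim
        · exact (key e he hwe hwf).elim
        · exact M2 false w e he f hf hwe hwf
    · -- start not in the even edges
      intro e he
      rw [hF] at he
      exact fun hw => hu (altE_mem_support he hw)
    · -- start has an odd edge
      intro _
      exact ⟨s(u, y), by rw [hT]; exact Finset.mem_insert_self _ _, Sym2.mem_mk_left _ _⟩
    · -- internal vertices
      intro w hw hwu hwv b
      rw [SimpleGraph.Walk.support_cons, List.mem_cons] at hw
      rcases hw with rfl | hw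
      · exact absurd rfl hwu
      by_cases hwy : w = y
      · subst hwy
        cases b with
        | true =>
          exact ⟨s(u, w), by rw [hT]; exact Finset.mem_insert_self _ _, Sym2.mem_mk_right _ _⟩
        | false =>
          rw [hF]
          have hq0 : 0 < q.length := by
            rcases Nat.eq_zero_or_pos q.length with h0 | h0
            · exact absurd (q.eq_of_length_eq_zero h0) hwv
            · exact h0
          exact M4 hq0
      · cases b with
        | true =>
          obtain ⟨e, he, hwe⟩ := M5 w hw hwy hwv false
          exact ⟨e, by rw [hT]; exact Finset.mem_insert_of_mem he, hwe⟩
        | false =>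
          rw [hF]; exact M5 w hw hwy hwv true
    · -- odd length: end has an odd edge and no even edge
      intro hodd
      rw [SimpleGraph.Walk.length_cons] at hodd
      have heven : Even q.length := Nat.not_odd_iff_even.mp (Nat.odd_add_one.mp hodd)
      constructor
      · rcases Nat.eq_zero_or_pos q.length with h0 | h0
        · have hyv : y = v := q.eq_of_length_eq_zero h0
          refine ⟨s(u, y), by rw [hT]; exact Finset.mem_insert_self _ _, ?_⟩
          rw [← hyv]; exact Sym2.mem_mk_right _ _
        · obtain ⟨e, he, hve⟩ := (M7 heven).2 h0
          exact ⟨e, by rw [hT]; exact Finset.mem_insert_of_mem he, hve⟩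
      · intro e he
        rw [hF] at he
        exact (M7 heven).1 e he
    · -- even length: end has no odd edge, but an even one
      intro heven
      rw [SimpleGraph.Walk.length_cons] at heven
      have hodd : Odd q.length := Nat.not_even_iff_odd.mp (Nat.even_add_one.mp heven)
      have hq0 : 0 < q.length := hodd.pos
      have hyv : y ≠ v := by
        intro h'
        subst h'
        rw [SimpleGraph.Walk.isPath_iff_eq_nil] at hq
        subst hq
        simp at hq0
      have huv : u ≠ v := by
        intro h'
        subst h'
        exact hu q.end_mem_support
      constructor
      · intro e he
        rw [hT] at he
        rcases Finset.mem_insert.1 he with rfl | he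
        · intro hve
          rcases Sym2.mem_iff.1 hve with h' | h'
          · exact huv h'.symm
          · exact hyv h'.symm
        · exact (M6 hodd).2 e he
      · intro _
        obtain ⟨e, he, hve⟩ := (M6 hodd).1
        exact ⟨e, by rw [hF]; exact he, hve⟩

lemma altE_disjoint {u v : V} (p : G.Walk u v) (hp : p.IsPath) :
    Disjoint (altE true p) (altE false p) := by
  induction p with
  | nil => simp
  | @cons u y v h q ih =>
    rw [SimpleGraph.Walk.cons_isPath_iff] at hp
    rw [altE_cons_true, altE_cons_false]
    rw [Finset.disjoint_left]
    intro e he he'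
    rcases Finset.mem_insert.1 he with rfl | he
    · exact hp.2 (altE_mem_support he' (Sym2.mem_mk_left _ _))
    · exact (Finset.disjoint_left.1 (ih hp.1).symm) he he'

/-- Uniqueness of alternating paths. -/
lemma alt_unique {x₂ : V} :
    ∀ {c : V} (r : G.Walk c x₂) (A B : Finset (Sym2 V)),
    (∀ e ∈ A, ∀ f ∈ A, ∀ w : V, w ∈ e → w ∈ f → e = f) →
    (∀ e ∈ B, ∀ f ∈ B, ∀ w : V, w ∈ e → w ∈ f → e = f) →
    r.IsPath → altE true r ⊆ B → altE false r ⊆ A →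
    ∀ (s : G.Walk c x₂), s.IsPath → altE true s ⊆ B → altE false s ⊆ A → r = s := by
  intro c r
  induction r with
  | nil =>
    intro A B _ _ _ _ _ s hs _ _
    exact (SimpleGraph.Walk.isPath_iff_eq_nil.1 hs).symm
  | @cons c y _ h q ih =>
    intro A B hA hB hr hrB hrA s hs hsB hsA
    cases s with
    | nil =>
      rw [SimpleGraph.Walk.isPath_iff_eq_nil] at hr
      exact absurd hr (by simp)
    | @cons _ y' _ h' q' =>
      rw [SimpleGraph.Walk.cons_isPath_iff] at hr hs
      have he : s(c, y) ∈ B := hrB (by rw [altE_cons_true]; exact Finset.mem_insert_self _ _)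
      have he' : s(c, y') ∈ B := hsB (by rw [altE_cons_true]; exact Finset.mem_insert_self _ _)
      have heq : s(c, y) = s(c, y') :=
        hB _ he _ he' c (Sym2.mem_mk_left _ _) (Sym2.mem_mk_left _ _)
      have hyy : y = y' := Sym2.congr_right.mp heq
      subst hyy
      have hq : q = q' := by
        refine ih B A hB hA hr.1 ?_ ?_ q' hs.1 ?_ ?_
        · intro e heA
          exact hrA (by rw [altE_cons_false]; exact heA)
        · intro e heB
          refine hrB ?_
          rw [altE_cons_true]
          exact Finset.mem_insert_of_mem heB
        · intro e heA
          exact hsA (by rw [altE_cons_false]; exact heA)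
        · intro e heB
          refine hsB ?_
          rw [altE_cons_true]
          exact Finset.mem_insert_of_mem heB
      rw [hq]

/-- Existence of the alternating path joining the two monomers. -/
lemma exists_alt_path {x₂ : V} :
    ∀ (n : ℕ) (S : Finset V) (a : V) (A B : Finset (Sym2 V)),
    S.card ≤ n → a ∈ S → x₂ ∈ S → a ≠ x₂ →
    (∀ e ∈ A, e ∈ G.edgeSet) →
    (∀ e ∈ A, ∀ w : V, w ∈ e → w ∈ S) →
    (∀ v ∈ S, v ≠ a → v ≠ x₂ → ∃! e, e ∈ A ∧ v ∈ e) →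
    (∀ e ∈ A, a ∉ e ∧ x₂ ∉ e) →
    (∀ e ∈ B, e ∈ G.edgeSet) →
    (∀ e ∈ B, ∀ w : V, w ∈ e → w ∈ S) →
    (∀ v ∈ S, ∃! e, e ∈ B ∧ v ∈ e) →
    ∃ p : G.Walk a x₂, p.IsPath ∧ Odd p.length ∧ (∀ w ∈ p.support, w ∈ S) ∧
      altE true p ⊆ B ∧ altE false p ⊆ A := by
  intro n
  induction n with
  | zero =>
    intro S a A B hcard ha _ _ _ _ _ _ _ _ _
    exact absurd (Finset.card_pos.2 ⟨a, ha⟩) (by omega)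
  | succ n ih =>
    intro S a A B hcard ha hx₂ hax AG AS Acov Aav BG BS Bcov
    -- the B-edge at a
    obtain ⟨e, ⟨heB, hae⟩, heu⟩ := Bcov a ha
    have hy := Sym2.other_spec hae
    set y := Sym2.Mem.other hae with hy_def
    have heGr : G.Adj a y := by
      rw [← SimpleGraph.mem_edgeSet, hy]
      exact BG e heB
    have hyS : y ∈ S := BS e heB y (by rw [← hy]; exact Sym2.mem_mk_right _ _)
    have hya : y ≠ a := fun h' => G.irrefl (h' ▸ heGr)
    by_cases hyx : y = x₂
    · -- one-step path
      subst hyx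
      refine ⟨SimpleGraph.Walk.cons heGr SimpleGraph.Walk.nil, ?_, ?_, ?_, ?_, ?_⟩
      · simp [SimpleGraph.Walk.cons_isPath_iff, hax]
      · simp
      · intro w hw
        rw [SimpleGraph.Walk.support_cons] at hw
        rcases List.mem_cons.1 hw with rfl | hw
        · exact ha
        · simp at hw; subst hw; exact hx₂
      · rw [altE_cons_true]
        intro f hf
        rcases Finset.mem_insert.1 hf with rfl | hf
        · rw [hy]; exact heB
        · simp at hf
      · rw [altE_cons_false]; simp
    · -- two steps then recurse
      have hyS' : y ∈ S := hyS
      obtain ⟨f, ⟨hfA, hyf⟩, hfu⟩ := Acov y hyS hya hyx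
      have hz := Sym2.other_spec hyf
      set z := Sym2.Mem.other hyf with hz_def
      have hfGr : G.Adj y z := by
        rw [← SimpleGraph.mem_edgeSet, hz]
        exact AG f hfA
      have hzy : z ≠ y := fun h' => G.irrefl (h' ▸ hfGr)
      have hza : z ≠ a := by
        intro h'
        exact (Aav f hfA).1 (h' ▸ (by rw [← hz]; exact Sym2.mem_mk_right _ _))
      have hzx : z ≠ x₂ := by
        intro h'
        exact (Aav f hfA).2 (h' ▸ (by rw [← hz]; exact Sym2.mem_mk_right _ _))
      have hzS : z ∈ S := AS f hfA z (by rw [← hz]; exact Sym2.mem_mk_right _ _)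
      -- the depleted state
      set S' : Finset V := (S.erase a).erase y with hS'
      have hmemS' : ∀ w : V, w ∈ S' ↔ (w ∈ S ∧ w ≠ a ∧ w ≠ y) := by
        intro w
        simp [hS', Finset.mem_erase]
        tauto
      have hzS' : z ∈ S' := (hmemS' z).2 ⟨hzS, hza, hzy⟩
      have hx₂S' : x₂ ∈ S' := (hmemS' x₂).2 ⟨hx₂, Ne.symm hax, fun h' => hyx h'.symm⟩
      have hcard' : S'.card ≤ n := by
        have h1 : (S.erase a).card < S.card := Finset.card_erase_lt_of_mem ha
        have h2 : S'.card ≤ (S.erase a).card := Finset.card_erase_le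
        omega
      -- uniqueness of the B-edge at y is e
      have hyeB : ∀ g ∈ B, y ∈ g → g = e := by
        intro g hg hyg
        obtain ⟨g', ⟨hg'B, hyg'⟩, hgu'⟩ := Bcov y hyS
        rw [hgu' g ⟨hg, hyg⟩, hgu' e ⟨heB, by rw [← hy]; exact Sym2.mem_mk_right _ _⟩]
      have hzfA : ∀ g ∈ A, z ∈ g → g = f := by
        intro g hg hzg
        obtain ⟨g', hg', hgu'⟩ := Acov z hzS hza hzx
        rw [hgu' g ⟨hg, hzg⟩, hgu' f ⟨hfA, by rw [← hz]; exact Sym2.mem_mk_right _ _⟩]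
      obtain ⟨p', hp'path, hp'odd, hp'S, hp'B, hp'A⟩ :=
        ih S' z (A.erase f) (B.erase e) hcard' hzS' hx₂S' hzx
          (fun g hg => AG g (Finset.mem_of_mem_erase hg))
          (by
            intro g hg w hw
            have hgA := Finset.mem_of_mem_erase hg
            refine (hmemS' w).2 ⟨AS g hgA w hw, ?_, ?_⟩
            · intro h'; exact (Aav g hgA).1 (h' ▸ hw)
            · intro h'
              exact (Finset.ne_of_mem_erase hg) (hfu g ⟨hgA, h' ▸ hw⟩))
          (by
            intro v hv hvz hvx
            obtain ⟨hvS, hva, hvy⟩ := (hmemS' v).1 hv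
            obtain ⟨g, ⟨hgA, hvg⟩, hgu⟩ := Acov v hvS hva hvx
            have hgf : g ≠ f := by
              intro h'
              subst h'
              have : v = y ∨ v = z := by
                have := hvg
                rw [← hz] at this
                rcases Sym2.mem_iff.1 this with h'' | h''
                · exact Or.inl h''
                · exact Or.inr h''
              rcases this with h'' | h''
              · exact hvy h''
              · exact hvz h''
            refine ⟨g, ⟨Finset.mem_erase_of_ne_of_mem hgf hgA, hvg⟩, ?_⟩
            intro g' ⟨hg', hvg'⟩
            exact hgu g' ⟨Finset.mem_of_mem_erase hg', hvg'⟩)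
          (by
            intro g hg
            have hgA := Finset.mem_of_mem_erase hg
            constructor
            · intro hzg
              exact (Finset.ne_of_mem_erase hg) (hzfA g hgA hzg)
            · exact (Aav g hgA).2)
          (fun g hg => BG g (Finset.mem_of_mem_erase hg))
          (by
            intro g hg w hw
            have hgB := Finset.mem_of_mem_erase hg
            refine (hmemS' w).2 ⟨BS g hgB w hw, ?_, ?_⟩
            · intro h'
              exact (Finset.ne_of_mem_erase hg) (heu g ⟨hgB, h' ▸ hw⟩)
            · intro h'
              exact (Finset.ne_of_mem_erase hg) (hyeB g hgB (h' ▸ hw)))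
          (by
            intro v hv
            obtain ⟨hvS, hva, hvy⟩ := (hmemS' v).1 hv
            obtain ⟨g, ⟨hgB, hvg⟩, hgu⟩ := Bcov v hvS
            have hge : g ≠ e := by
              intro h'
              subst h'
              have : v = a ∨ v = y := by
                have := hvg
                rw [← hy] at this
                rcases Sym2.mem_iff.1 this with h'' | h''
                · exact Or.inl h''
                · exact Or.inr h''
              rcases this with h'' | h''
              · exact hva h''
              · exact hvy h''
            refine ⟨g, ⟨Finset.mem_erase_of_ne_of_mem hge hgB, hvg⟩, ?_⟩
            intro g' ⟨hg', hvg'⟩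
            exact hgu g' ⟨Finset.mem_of_mem_erase hg', hvg'⟩)
      -- assemble
      have hyp' : y ∉ p'.support := by
        intro h'
        obtain ⟨_, _, h''⟩ := (hmemS' y).1 (hp'S y h')
        exact h'' rfl
      have hap' : a ∉ p'.support := by
        intro h'
        obtain ⟨_, h'', _⟩ := (hmemS' a).1 (hp'S a h')
        exact h'' rfl
      refine ⟨SimpleGraph.Walk.cons heGr (SimpleGraph.Walk.cons hfGr p'), ?_, ?_, ?_, ?_, ?_⟩
      · rw [SimpleGraph.Walk.cons_isPath_iff, SimpleGraph.Walk.cons_isPath_iff]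
        refine ⟨⟨hp'path, hyp'⟩, ?_⟩
        rw [SimpleGraph.Walk.support_cons, List.mem_cons]
        rintro (h' | h')
        · exact hya h'.symm
        · exact hap' h'
      · rw [SimpleGraph.Walk.length_cons, SimpleGraph.Walk.length_cons]
        obtain ⟨k, hk⟩ := hp'odd
        exact ⟨k + 1, by omega⟩
      · intro w hw
        rw [SimpleGraph.Walk.support_cons, List.mem_cons] at hw
        rcases hw with rfl | hw
        · exact ha
        rw [SimpleGraph.Walk.support_cons, List.mem_cons] at hw
        rcases hw with rfl | hw
        · exact hyS
        · exact Finset.mem_of_mem_erase (Finset.mem_of_mem_erase (hp'S w hw))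
      · rw [altE_cons_true, altE_cons_false]
        intro g hg
        rcases Finset.mem_insert.1 hg with rfl | hg
        · rw [hy]; exact heB
        · exact Finset.mem_of_mem_erase (hp'B hg)
      · rw [altE_cons_false, altE_cons_true]
        intro g hg
        rcases Finset.mem_insert.1 hg with rfl | hg
        · rw [hz]; exact hfA
        · exact Finset.mem_of_mem_erase (hp'A hg)

section Main
variable [Fintype V] {x₁ x₂ : V}

lemma sigma_disjoint_altE {p : G.Walk x₁ x₂} {σ : Finset (Sym2 V)}
    (hσ : ∀ v ∈ p.support.toFinset, ∀ e ∈ σ, v ∉ e) (b : Bool) :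
    Disjoint σ (altE b p) := by
  rw [Finset.disjoint_left]
  intro e he he'
  induction e with
  | h x y =>
    exact hσ x (List.mem_toFinset.2 (altE_mem_support he' (Sym2.mem_mk_left _ _))) _ he
      (Sym2.mem_mk_left _ _)

lemma cover_union_false (hx : x₁ ≠ x₂) {p : G.Walk x₁ x₂} (hp : p.IsPath)
    (hodd : Odd p.length) {σ : Finset (Sym2 V)}
    (hσ : IsDimerCover G p.support.toFinset σ) :
    IsDimerCover G {x₁, x₂} (σ ∪ altE false p) := by
  obtain ⟨M2, M3, M4, M5, M6, M7⟩ := alt_main p hp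
  obtain ⟨hσG, hσav, hσcov⟩ := hσ
  refine ⟨?_, ?_, ?_⟩
  · intro e he
    rcases Finset.mem_union.1 he with he | he
    · exact hσG e he
    · exact p.edges_subset_edgeSet (altE_subset_edges p e he)
  · intro v hv e he
    have hvs : v ∈ p.support.toFinset := by
      rcases Finset.mem_insert.1 hv with rfl | hv
      · exact List.mem_toFinset.2 p.start_mem_support
      · rw [Finset.mem_singleton] at hv
        subst hv
        exact List.mem_toFinset.2 p.end_mem_support
    rcases Finset.mem_union.1 he with he | he
    · exact hσav v hvs e he
    · rcases Finset.mem_insert.1 hv with rfl | hv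
      · exact M3 e he
      · rw [Finset.mem_singleton] at hv
        subst hv
        exact (M6 hodd).2 e he
  · intro v hv
    have hvx₁ : v ≠ x₁ := fun h' => hv (h' ▸ Finset.mem_insert_self _ _)
    have hvx₂ : v ≠ x₂ := fun h' =>
      hv (h' ▸ Finset.mem_insert_of_mem (Finset.mem_singleton_self _))
    by_cases hvs : v ∈ p.support
    · obtain ⟨e, he, hve⟩ := M5 v hvs hvx₁ hvx₂ false
      refine ⟨e, ⟨Finset.mem_union_right _ he, hve⟩, ?_⟩
      rintro f ⟨hf, hvf⟩
      rcases Finset.mem_union.1 hf with hf | hf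
      · exact absurd hvf (hσav v (List.mem_toFinset.2 hvs) f hf)
      · exact M2 false v f hf e he hvf hve
    · obtain ⟨e, ⟨he, hve⟩, heu⟩ := hσcov v (fun h' => hvs (List.mem_toFinset.1 h'))
      refine ⟨e, ⟨Finset.mem_union_left _ he, hve⟩, ?_⟩
      rintro f ⟨hf, hvf⟩
      rcases Finset.mem_union.1 hf with hf | hf
      · exact heu f ⟨hf, hvf⟩
      · exact absurd (altE_mem_support hf hvf) hvs

lemma cover_union_true (hx : x₁ ≠ x₂) {p : G.Walk x₁ x₂} (hp : p.IsPath)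
    (hodd : Odd p.length) {σ : Finset (Sym2 V)}
    (hσ : IsDimerCover G p.support.toFinset σ) :
    IsDimerCover G ∅ (σ ∪ altE true p) := by
  obtain ⟨M2, M3, M4, M5, M6, M7⟩ := alt_main p hp
  obtain ⟨hσG, hσav, hσcov⟩ := hσ
  refine ⟨?_, by simp, ?_⟩
  · intro e he
    rcases Finset.mem_union.1 he with he | he
    · exact hσG e he
    · exact p.edges_subset_edgeSet (altE_subset_edges p e he)
  · intro v _
    by_cases hvs : v ∈ p.support
    · have hex : ∃ e ∈ altE true p, v ∈ e := by
        by_cases hvx₁ : v = x₁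
        · subst hvx₁; exact M4 hodd.pos
        by_cases hvx₂ : v = x₂
        · subst hvx₂; exact (M6 hodd).1
        · exact M5 v hvs hvx₁ hvx₂ true
      obtain ⟨e, he, hve⟩ := hex
      refine ⟨e, ⟨Finset.mem_union_right _ he, hve⟩, ?_⟩
      rintro f ⟨hf, hvf⟩
      rcases Finset.mem_union.1 hf with hf | hf
      · exact absurd hvf (hσav v (List.mem_toFinset.2 hvs) f hf)
      · exact M2 true v f hf e he hvf hve
    · obtain ⟨e, ⟨he, hve⟩, heu⟩ := hσcov v (fun h' => hvs (List.mem_toFinset.1 h'))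
      refine ⟨e, ⟨Finset.mem_union_left _ he, hve⟩, ?_⟩
      rintro f ⟨hf, hvf⟩
      rcases Finset.mem_union.1 hf with hf | hf
      · exact heu f ⟨hf, hvf⟩
      · exact absurd (altE_mem_support hf hvf) hvs

end Main

section Main2
variable [Fintype V] {x₁ x₂ : V}

lemma leftover_cover_false (hx : x₁ ≠ x₂) {p : G.Walk x₁ x₂} (hp : p.IsPath)
    (hodd : Odd p.length) {ω : Finset (Sym2 V)}
    (hω : IsDimerCover G {x₁, x₂} ω) (hsub : altE false p ⊆ ω) :
    IsDimerCover G p.support.toFinset (ω \ altE false p) := by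
  obtain ⟨M2, M3, M4, M5, M6, M7⟩ := alt_main p hp
  obtain ⟨hG, hav, hcov⟩ := hω
  refine ⟨fun e he => hG e (Finset.mem_sdiff.1 he).1, ?_, ?_⟩
  · intro v hv e he
    rw [Finset.mem_sdiff] at he
    intro hve
    by_cases hvx₁ : v = x₁
    · exact hav v (by simp [hvx₁]) e he.1 hve
    by_cases hvx₂ : v = x₂
    · exact hav v (by simp [hvx₂]) e he.1 hve
    obtain ⟨f, hf, hvf⟩ := M5 v (List.mem_toFinset.1 hv) hvx₁ hvx₂ false
    obtain ⟨g, _, hgu⟩ := hcov v (by simp [hvx₁, hvx₂])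
    have h1 : e = g := hgu e ⟨he.1, hve⟩
    have h2 : f = g := hgu f ⟨hsub hf, hvf⟩
    exact he.2 (h1 ▸ h2 ▸ hf)
  · intro v hv
    have hvs : v ∉ p.support := fun h' => hv (List.mem_toFinset.2 h')
    have hvx : v ∉ ({x₁, x₂} : Finset V) := by
      intro h'
      rcases Finset.mem_insert.1 h' with rfl | h'
      · exact hvs p.start_mem_support
      · rw [Finset.mem_singleton] at h'
        exact hvs (h' ▸ p.end_mem_support)
    obtain ⟨e, ⟨he, hve⟩, heu⟩ := hcov v hvx
    have henot : e ∉ altE false p := fun h' => hvs (altE_mem_support h' hve)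
    exact ⟨e, ⟨Finset.mem_sdiff.2 ⟨he, henot⟩, hve⟩, fun f ⟨hf, hvf⟩ =>
      heu f ⟨(Finset.mem_sdiff.1 hf).1, hvf⟩⟩

lemma leftover_cover_true (hx : x₁ ≠ x₂) {p : G.Walk x₁ x₂} (hp : p.IsPath)
    (hodd : Odd p.length) {ω : Finset (Sym2 V)}
    (hω : IsDimerCover G ∅ ω) (hsub : altE true p ⊆ ω) :
    IsDimerCover G p.support.toFinset (ω \ altE true p) := by
  obtain ⟨M2, M3, M4, M5, M6, M7⟩ := alt_main p hp
  obtain ⟨hG, hav, hcov⟩ := hω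
  refine ⟨fun e he => hG e (Finset.mem_sdiff.1 he).1, ?_, ?_⟩
  · intro v hv e he
    rw [Finset.mem_sdiff] at he
    intro hve
    have hex : ∃ f ∈ altE true p, v ∈ f := by
      by_cases hvx₁ : v = x₁
      · subst hvx₁; exact M4 hodd.pos
      by_cases hvx₂ : v = x₂
      · subst hvx₂; exact (M6 hodd).1
      · exact M5 v (List.mem_toFinset.1 hv) hvx₁ hvx₂ true
    obtain ⟨f, hf, hvf⟩ := hex
    obtain ⟨g, _, hgu⟩ := hcov v (Finset.notMem_empty v)
    have h1 : e = g := hgu e ⟨he.1, hve⟩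
    have h2 : f = g := hgu f ⟨hsub hf, hvf⟩
    exact he.2 (h1 ▸ h2 ▸ hf)
  · intro v hv
    have hvs : v ∉ p.support := fun h' => hv (List.mem_toFinset.2 h')
    obtain ⟨e, ⟨he, hve⟩, heu⟩ := hcov v (Finset.notMem_empty v)
    have henot : e ∉ altE true p := fun h' => hvs (altE_mem_support h' hve)
    exact ⟨e, ⟨Finset.mem_sdiff.2 ⟨he, henot⟩, hve⟩, fun f ⟨hf, hvf⟩ =>
      heu f ⟨(Finset.mem_sdiff.1 hf).1, hvf⟩⟩

end Main2

lemma cover_atMostOne {M : Finset V} {ω : Finset (Sym2 V)} (hω : IsDimerCover G M ω) :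
    ∀ e ∈ ω, ∀ f ∈ ω, ∀ w : V, w ∈ e → w ∈ f → e = f := by
  intro e he f hf w hwe hwf
  by_cases hwM : w ∈ M
  · exact absurd hwe (hω.2.1 w hwM e he)
  · obtain ⟨g, _, hgu⟩ := hω.2.2 w hwM
    rw [hgu e ⟨he, hwe⟩, hgu f ⟨hf, hwf⟩]

open scoped Classical in
lemma walkify [Fintype V] [DecidableRel G.Adj] {x₁ x₂ : V} (F : G.Walk x₁ x₂ → ℂ) :
    (∑ γ ∈ (Finset.univ : Finset (G.Path x₁ x₂)).filter
        (fun γ => Odd (γ : G.Walk x₁ x₂).length), F (γ : G.Walk x₁ x₂))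
    = ∑ γ ∈ Finset.univ.filter (fun γ : G.Path x₁ x₂ => Odd (γ : G.Walk x₁ x₂).length),
        F (γ : G.Walk x₁ x₂) := by
  have hbind : ((Finset.univ : Finset (G.Path x₁ x₂)) >>= fun a => (pure (↑a : G.Walk x₁ x₂)))
      = Finset.univ.image (fun a : G.Path x₁ x₂ => (a : G.Walk x₁ x₂)) := by
    ext w
    simp [Bind.bind, Finset.mem_sup]
  rw [hbind, Finset.filter_image, Finset.sum_image]
  intro a _ b _ hab
  exact Subtype.ext hab

open scoped Classical in
lemma key_identity [Fintype V] [DecidableRel G.Adj] (K : Sym2 V → ℂ) (x₁ x₂ : V) (hx : x₁ ≠ x₂) :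
    Zdimer G K {x₁, x₂} * Zdimer G K ∅ =
      ∑ γ ∈ (Finset.univ : Finset (G.Path x₁ x₂)).filter
          (fun γ => Odd (γ : G.Walk x₁ x₂).length),
        (∏ b ∈ (γ : G.Walk x₁ x₂).edges.toFinset, K b) *
          (Zdimer G K (γ : G.Walk x₁ x₂).support.toFinset) ^ 2 := by
  set D₁ : Finset (Finset (Sym2 V)) := Finset.univ.filter (IsDimerCover G {x₁, x₂}) with hD₁
  set D₀ : Finset (Finset (Sym2 V)) := Finset.univ.filter (IsDimerCover G ∅) with hD₀
  set P : G.Path x₁ x₂ × Finset (Sym2 V) × Finset (Sym2 V) → Prop :=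
    fun t => Odd (t.1 : G.Walk x₁ x₂).length ∧
      IsDimerCover G (t.1 : G.Walk x₁ x₂).support.toFinset t.2.1 ∧
      IsDimerCover G (t.1 : G.Walk x₁ x₂).support.toFinset t.2.2 with hP
  set T : Finset (G.Path x₁ x₂ × Finset (Sym2 V) × Finset (Sym2 V)) :=
    Finset.univ.filter P with hT
  set g : G.Path x₁ x₂ × Finset (Sym2 V) × Finset (Sym2 V) → ℂ :=
    fun t => (∏ b ∈ (t.1 : G.Walk x₁ x₂).edges.toFinset, K b) *
      ((∏ b ∈ t.2.1, K b) * (∏ b ∈ t.2.2, K b)) with hg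
  have step1 : Zdimer G K {x₁, x₂} * Zdimer G K ∅ =
      ∑ pr ∈ D₁ ×ˢ D₀, (∏ b ∈ pr.1, K b) * (∏ b ∈ pr.2, K b) := by
    rw [Zdimer, Zdimer, Finset.sum_mul_sum, Finset.sum_product]
  have step2 : ∑ pr ∈ D₁ ×ˢ D₀, (∏ b ∈ pr.1, K b) * (∏ b ∈ pr.2, K b) =
      ∑ t ∈ T, g t := by
    refine (Finset.sum_nbij
      (fun t => (t.2.1 ∪ altE false (t.1 : G.Walk x₁ x₂),
                 t.2.2 ∪ altE true (t.1 : G.Walk x₁ x₂))) ?_ ?_ ?_ ?_).symm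
    · -- maps T into D₁ ×ˢ D₀
      rintro ⟨γ, σ₁, σ₂⟩ ht
      obtain ⟨hodd, hσ₁, hσ₂⟩ := (Finset.mem_filter.1 ht).2
      rw [Finset.mem_product]
      constructor
      · rw [hD₁, Finset.mem_filter]
        exact ⟨Finset.mem_univ _, cover_union_false hx γ.2 hodd hσ₁⟩
      · rw [hD₀, Finset.mem_filter]
        exact ⟨Finset.mem_univ _, cover_union_true hx γ.2 hodd hσ₂⟩
    · -- injective on T
      rintro ⟨γ, σ₁, σ₂⟩ ht ⟨γ', σ₁', σ₂'⟩ ht' heq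
      simp only [Finset.coe_filter, Set.mem_setOf_eq, hT] at ht ht'
      obtain ⟨hodd, hσ₁, hσ₂⟩ := ht.2
      obtain ⟨hodd', hσ₁', hσ₂'⟩ := ht'.2
      have h1 := congrArg Prod.fst heq
      have h2 := congrArg Prod.snd heq
      simp only at h1 h2
      have hω₁ := cover_union_false hx γ.2 hodd hσ₁
      have hω₂ := cover_union_true hx γ.2 hodd hσ₂
      have hω₁' := cover_union_false hx γ'.2 hodd' hσ₁'
      have hω₂' := cover_union_true hx γ'.2 hodd' hσ₂'
      have hwalk : (γ : G.Walk x₁ x₂) = (γ' : G.Walk x₁ x₂) := by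
        refine alt_unique (γ : G.Walk x₁ x₂)
          (σ₁ ∪ altE false (γ : G.Walk x₁ x₂)) (σ₂ ∪ altE true (γ : G.Walk x₁ x₂))
          (cover_atMostOne hω₁) (cover_atMostOne hω₂) γ.2
          Finset.subset_union_right Finset.subset_union_right
          (γ' : G.Walk x₁ x₂) γ'.2 ?_ ?_
        · rw [h2]; exact Finset.subset_union_right
        · rw [h1]; exact Finset.subset_union_right
      have hγ : γ = γ' := Subtype.ext hwalk
      subst hγ
      have hd₁ : Disjoint σ₁ (altE false (γ : G.Walk x₁ x₂)) :=
        sigma_disjoint_altE hσ₁.2.1 false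
      have hd₁' : Disjoint σ₁' (altE false (γ : G.Walk x₁ x₂)) :=
        sigma_disjoint_altE hσ₁'.2.1 false
      have hd₂ : Disjoint σ₂ (altE true (γ : G.Walk x₁ x₂)) :=
        sigma_disjoint_altE hσ₂.2.1 true
      have hd₂' : Disjoint σ₂' (altE true (γ : G.Walk x₁ x₂)) :=
        sigma_disjoint_altE hσ₂'.2.1 true
      have e1 : σ₁ = σ₁' := by
        rw [← Finset.union_sdiff_cancel_right hd₁, h1, Finset.union_sdiff_cancel_right hd₁']
      have e2 : σ₂ = σ₂' := by
        rw [← Finset.union_sdiff_cancel_right hd₂, h2, Finset.union_sdiff_cancel_right hd₂']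
      rw [e1, e2]
    · -- surjective onto D₁ ×ˢ D₀
      rintro ⟨ω₁, ω₂⟩ hpr
      rw [Finset.coe_product, Set.mem_prod] at hpr
      obtain ⟨h1, h2⟩ := hpr
      have hω₁ : IsDimerCover G {x₁, x₂} ω₁ := (Finset.mem_filter.1 (by exact_mod_cast h1)).2
      have hω₂ : IsDimerCover G ∅ ω₂ := (Finset.mem_filter.1 (by exact_mod_cast h2)).2
      obtain ⟨p, hpath, hodd, hpS, hpB, hpA⟩ :=
        exists_alt_path (Finset.univ : Finset V).card Finset.univ x₁ ω₁ ω₂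
          le_rfl (Finset.mem_univ _) (Finset.mem_univ _) hx
          (fun e he => hω₁.1 e he)
          (fun e _ w _ => Finset.mem_univ w)
          (fun v _ hv₁ hv₂ => hω₁.2.2 v (by simp [hv₁, hv₂]))
          (fun e he => ⟨hω₁.2.1 x₁ (by simp) e he, hω₁.2.1 x₂ (by simp) e he⟩)
          (fun e he => hω₂.1 e he)
          (fun e _ w _ => Finset.mem_univ w)
          (fun v _ => hω₂.2.2 v (Finset.notMem_empty v))
      refine ⟨(⟨p, hpath⟩, ω₁ \ altE false p, ω₂ \ altE true p), ?_, ?_⟩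
      · rw [Finset.mem_coe, hT, Finset.mem_filter]
        exact ⟨Finset.mem_univ _, hodd, leftover_cover_false hx hpath hodd hω₁ hpA,
          leftover_cover_true hx hpath hodd hω₂ hpB⟩
      · simp only
        rw [Finset.sdiff_union_of_subset hpA, Finset.sdiff_union_of_subset hpB]
    · -- values agree
      rintro ⟨γ, σ₁, σ₂⟩ ht
      obtain ⟨hodd, hσ₁, hσ₂⟩ := (Finset.mem_filter.1 (by exact_mod_cast ht)).2
      simp only [hg]
      rw [Finset.prod_union (sigma_disjoint_altE hσ₁.2.1 false),
        Finset.prod_union (sigma_disjoint_altE hσ₂.2.1 true),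
        ← altE_union (γ : G.Walk x₁ x₂),
        Finset.prod_union (altE_disjoint (γ : G.Walk x₁ x₂) γ.2)]
      ring
  have inner : ∀ γ : G.Path x₁ x₂,
      (∑ s : Finset (Sym2 V) × Finset (Sym2 V), if P (γ, s) then g (γ, s) else 0) =
        if Odd (γ : G.Walk x₁ x₂).length then
          (∏ b ∈ (γ : G.Walk x₁ x₂).edges.toFinset, K b) *
            (Zdimer G K (γ : G.Walk x₁ x₂).support.toFinset) ^ 2
        else 0 := by
    intro γ
    rw [← Finset.univ_product_univ, Finset.sum_product]
    by_cases ho : Odd (γ : G.Walk x₁ x₂).length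
    · rw [if_pos ho]
      have hz : Zdimer G K (γ : G.Walk x₁ x₂).support.toFinset =
          ∑ σ : Finset (Sym2 V),
            if IsDimerCover G (γ : G.Walk x₁ x₂).support.toFinset σ
            then ∏ b ∈ σ, K b else 0 := by
        rw [Zdimer, Finset.sum_filter]
      rw [sq, hz, Finset.sum_mul_sum]
      rw [Finset.mul_sum]
      refine Finset.sum_congr rfl ?_
      intro σ₁ _
      rw [Finset.mul_sum]
      refine Finset.sum_congr rfl ?_
      intro σ₂ _
      by_cases h₁ : IsDimerCover G (γ : G.Walk x₁ x₂).support.toFinset σ₁ <;>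
        by_cases h₂ : IsDimerCover G (γ : G.Walk x₁ x₂).support.toFinset σ₂ <;>
        simp [hP, hg, ho, h₁, h₂] <;> ring
    · rw [if_neg ho]
      refine Finset.sum_eq_zero fun σ₁ _ => Finset.sum_eq_zero fun σ₂ _ => ?_
      rw [if_neg]
      simp only [hP]
      tauto
  have step3 : ∑ t ∈ T, g t =
      ∑ γ ∈ (Finset.univ : Finset (G.Path x₁ x₂)).filter
          (fun γ => Odd (γ : G.Walk x₁ x₂).length),
        (∏ b ∈ (γ : G.Walk x₁ x₂).edges.toFinset, K b) *
          (Zdimer G K (γ : G.Walk x₁ x₂).support.toFinset) ^ 2 := by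
    calc ∑ t ∈ T, g t = ∑ t : G.Path x₁ x₂ × Finset (Sym2 V) × Finset (Sym2 V),
          if P t then g t else 0 := Finset.sum_filter _ _
      _ = ∑ γ : G.Path x₁ x₂, ∑ s : Finset (Sym2 V) × Finset (Sym2 V),
            if P (γ, s) then g (γ, s) else 0 := by
          rw [← Finset.univ_product_univ, Finset.sum_product]
      _ = ∑ γ : G.Path x₁ x₂,
            if Odd (γ : G.Walk x₁ x₂).length then
              (∏ b ∈ (γ : G.Walk x₁ x₂).edges.toFinset, K b) *
                (Zdimer G K (γ : G.Walk x₁ x₂).support.toFinset) ^ 2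
            else 0 := Finset.sum_congr rfl fun γ _ => inner γ
      _ = ∑ γ ∈ Finset.univ.filter (fun γ : G.Path x₁ x₂ => Odd (γ : G.Walk x₁ x₂).length),
            (∏ b ∈ (γ : G.Walk x₁ x₂).edges.toFinset, K b) *
              (Zdimer G K (γ : G.Walk x₁ x₂).support.toFinset) ^ 2 :=
          (Finset.sum_filter _ _).symm
      _ = _ := (walkify (fun w : G.Walk x₁ x₂ =>
            (∏ b ∈ w.edges.toFinset, K b) * (Zdimer G K w.support.toFinset) ^ 2)).symm
  rw [step1, step2, step3]


end Aux

/-- Path representation of the monomer two-point function: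
`S₂(x₁,x₂) = Σ_γ χ_K(γ) (Z_{G,K}(V(γ))/Z_{G,K})²`, the sum running over all
simple paths `γ` from `x₁` to `x₂` in `G` with an odd number of edges. -/
theorem two_point_function_path_representation {V : Type*} [Fintype V] [DecidableEq V]
    (G : SimpleGraph V) [DecidableRel G.Adj] (K : Sym2 V → ℂ)
    (hZ : Zdimer G K ∅ ≠ 0) (x₁ x₂ : V) (hx : x₁ ≠ x₂) :
    Zdimer G K {x₁, x₂} / Zdimer G K ∅ =
      ∑ γ ∈ (Finset.univ : Finset (G.Path x₁ x₂)).filter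
          (fun γ => Odd (γ : G.Walk x₁ x₂).length),
        (∏ b ∈ (γ : G.Walk x₁ x₂).edges.toFinset, K b) *
          (Zdimer G K (γ : G.Walk x₁ x₂).support.toFinset / Zdimer G K ∅) ^ 2 := by
  have key := key_identity (G := G) K x₁ x₂ hx
  have h2 : ∀ γ : G.Walk x₁ x₂,
      (∏ b ∈ γ.edges.toFinset, K b) * (Zdimer G K γ.support.toFinset / Zdimer G K ∅) ^ 2 =
      ((∏ b ∈ γ.edges.toFinset, K b) * (Zdimer G K γ.support.toFinset) ^ 2) /
        (Zdimer G K ∅ ^ 2) := by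
    intro γ
    field_simp
  calc Zdimer G K {x₁, x₂} / Zdimer G K ∅
      = (Zdimer G K {x₁, x₂} * Zdimer G K ∅) / (Zdimer G K ∅ ^ 2) := by
        rw [sq]
        field_simp
      _ = (∑ γ ∈ (Finset.univ : Finset (G.Path x₁ x₂)).filter
            (fun γ => Odd (γ : G.Walk x₁ x₂).length),
          (∏ b ∈ (γ : G.Walk x₁ x₂).edges.toFinset, K b) *
            (Zdimer G K (γ : G.Walk x₁ x₂).support.toFinset) ^ 2) / (Zdimer G K ∅ ^ 2) := by
        rw [key]
      _ = _ := by
        rw [Finset.sum_div]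
        exact Finset.sum_congr rfl fun γ _ => (h2 γ).symm
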